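/- Let $f_0 \geq f^*$ be reals, $A, B > 0$, and $(g_k)_{k\geq 0}$ a sequence of nonnegative reals. Suppose there is a sequence $(F_k)$ with $F_0 = f_0$, $F_k \geq f^*$, and $F_k - F_{k+1} \geq \min\{A g_k^2, B g_k\}$ for all $k$. Then for every $N \geq 1$, $\min_{0 \leq k \leq N-1} g_k \leq \max\left\{\sqrt{\frac{f_0 - f^*}{A N}}, \frac{f_0 - f^*}{B N}\right\}$; in particular $\min_{0 \leq k \leq N-1} g_k = \mathcal{O}(1/\sqrt{N})$. -/
import Mathlib


theorem stmt_9 (f0 fstar : ℝ) (hf : f0 ≥ fstar) (A B : ℝ) (hA : 0 < A) (hB : 0 < B)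
    (g : ℕ → ℝ) (hg : ∀ k, 0 ≤ g k)
    (F : ℕ → ℝ) (hF0 : F 0 = f0) (hFlb : ∀ k, F k ≥ fstar)
    (hdec : ∀ k, F k - F (k + 1) ≥ min (A * g k ^ 2) (B * g k)) :
    ∀ N : ℕ, 1 ≤ N → ∃ k, k ≤ N - 1 ∧
      g k ≤ max (Real.sqrt ((f0 - fstar) / (A * N))) ((f0 - fstar) / (B * N)) := by
  intro N hN
  obtain ⟨k0, hk0mem, hk0min⟩ := Finset.exists_min_image (Finset.range N) g
    (by simp; omega)
  simp only [Finset.mem_range] at hk0mem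
  refine ⟨k0, by omega, ?_⟩
  set m := g k0 with hm
  have hm0 : 0 ≤ m := hg k0
  have hNpos : (0:ℝ) < N := by exact_mod_cast Nat.pos_of_ne_zero (by omega)
  have hsum : (N:ℝ) * min (A * m ^ 2) (B * m) ≤ f0 - fstar := by
    calc (N:ℝ) * min (A * m ^ 2) (B * m)
        = ∑ k ∈ Finset.range N, min (A * m ^ 2) (B * m) := by
          simp [mul_comm]
      _ ≤ ∑ k ∈ Finset.range N, (F k - F (k + 1)) := by
          refine Finset.sum_le_sum (fun k hk => le_trans ?_ (hdec k))
          have hmk : m ≤ g k := hk0min k (by simpa using hk)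
          refine le_min ?_ ?_
          · exact le_trans (min_le_left _ _)
              (mul_le_mul_of_nonneg_left (pow_le_pow_left₀ hm0 hmk 2) hA.le)
          · exact le_trans (min_le_right _ _)
              (mul_le_mul_of_nonneg_left hmk hB.le)
      _ = F 0 - F N := Finset.sum_range_sub' F N
      _ ≤ f0 - fstar := by have := hFlb N; linarith [hF0.symm.le]
  rcases le_or_gt (A * m ^ 2) (B * m) with hcase | hcase
  · refine le_max_of_le_left ?_
    rw [Real.le_sqrt hm0 (div_nonneg (by linarith) (by positivity))]
    rw [min_eq_left hcase] at hsum
    rw [le_div_iff₀ (by positivity)]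
    nlinarith
  · refine le_max_of_le_right ?_
    rw [min_eq_right hcase.le] at hsum
    rw [le_div_iff₀ (by positivity)]
    nlinarith
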